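/- Let q be a C^1 function on [0,∞) and define γ(y) = 2∫_0^y q(ξ) dξ and the scale function Λ(z) = ∫_0^z e^{γ(y)} dy. If the integral ∫_0^∞ e^{γ(y)} ∫_y^∞ e^{-γ(z)} dz dy is finite, then Λ(z) → ∞ as z → ∞. -/

import Mathlib

open MeasureTheory Real Filter

/-- If q is C¹ on [0,∞), γ(y) = 2∫₀^y q, Λ(z) = ∫₀^z e^{γ(y)} dy, and
H1: ∫₀^∞ e^{γ(y)} ∫_y^∞ e^{-γ(z)} dz dy < ∞, then Λ(z) → ∞ as z → ∞. -/
theorem scale_function_tendsto_atTop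
    (q γ : ℝ → ℝ)
    (hq : ContDiffOn ℝ 1 q (Set.Ici 0))
    (hγ : ∀ y, γ y = 2 * ∫ t in (0:ℝ)..y, q t)
    (H1 : ∫⁻ y in Set.Ioi (0:ℝ),
        ENNReal.ofReal (Real.exp (γ y)) *
          ∫⁻ z in Set.Ioi y, ENNReal.ofReal (Real.exp (-(γ z))) < ⊤) :
    Tendsto (fun z => ∫ y in (0:ℝ)..z, Real.exp (γ y)) atTop atTop := by
  set f : ℝ → ℝ := fun y => Real.exp (γ y) with hf
  set g : ℝ → ℝ := fun y => Real.exp (-(γ y)) with hg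
  set Λ : ℝ → ℝ := fun z => ∫ y in (0:ℝ)..z, f y with hΛ
  -- continuity of γ on Icc 0 b for b ≥ 0
  have hγc : ∀ b : ℝ, 0 ≤ b → ContinuousOn γ (Set.Icc 0 b) := by
    intro b hb
    have hqint : IntegrableOn q (Set.uIcc 0 b) :=
      (hq.continuousOn.mono (by rw [Set.uIcc_of_le hb]; exact fun x hx => hx.1)).integrableOn_compact isCompact_uIcc
    have := (intervalIntegral.continuousOn_primitive_interval hqint)
    have h2 : ContinuousOn (fun y => 2 * ∫ t in (0:ℝ)..y, q t) (Set.uIcc 0 b) :=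
      continuousOn_const.mul this
    refine (h2.congr fun y _ => (hγ y)).mono ?_
    rw [Set.uIcc_of_le hb]
  have hγcIoc : ∀ b : ℝ, 0 ≤ b → ContinuousOn γ (Set.Icc 0 b) := hγc
  -- interval integrability of f on [a,b] ⊆ [0,∞)
  have hfc : ∀ b : ℝ, 0 ≤ b → ContinuousOn f (Set.Icc 0 b) := fun b hb =>
    Real.continuous_exp.comp_continuousOn (hγc b hb)
  have hgc : ∀ b : ℝ, 0 ≤ b → ContinuousOn g (Set.Icc 0 b) := fun b hb =>
    Real.continuous_exp.comp_continuousOn ((hγc b hb).neg)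
  have hfint : ∀ a b : ℝ, 0 ≤ a → 0 ≤ b → IntervalIntegrable f volume a b := by
    intro a b ha hb
    apply ContinuousOn.intervalIntegrable
    exact (hfc (max a b) (le_max_of_le_left ha)).mono
      (Set.uIcc_subset_Icc ⟨ha, le_max_left a b⟩ ⟨hb, le_max_right a b⟩)
  have hfnonneg : ∀ y, 0 ≤ f y := fun y => (Real.exp_pos _).le
  -- monotonicity of Λ on [0, ∞)
  have hmono : ∀ a b : ℝ, 0 ≤ a → a ≤ b → Λ a ≤ Λ b := by
    intro a b ha hab
    have h1 : Λ a + ∫ y in a..b, f y = Λ b :=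
      intervalIntegral.integral_add_adjacent_intervals (hfint 0 a le_rfl ha)
        (hfint a b ha (ha.trans hab))
    nlinarith [intervalIntegral.integral_nonneg (μ := volume) hab (fun u _ => hfnonneg u)]
  -- key claim: Λ is unbounded on [0,∞)
  have key : ∀ C : ℝ, ∃ z, 0 ≤ z ∧ C ≤ Λ z := by
    by_contra hcon
    push_neg at hcon
    obtain ⟨C, hC⟩ := hcon
    -- Λ z < C for all z ≥ 0
    have hA : ∀ x : ℝ, 0 ≤ x → ∫⁻ y in Set.Ioc 0 x, ENNReal.ofReal (f y) ≤ ENNReal.ofReal C := by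
      intro x hx
      have hi : IntegrableOn f (Set.Ioc 0 x) :=
        (intervalIntegrable_iff_integrableOn_Ioc_of_le hx).mp (hfint 0 x le_rfl hx)
      rw [← ofReal_integral_eq_lintegral_ofReal hi (Filter.Eventually.of_forall hfnonneg)]
      apply ENNReal.ofReal_le_ofReal
      rw [← intervalIntegral.integral_of_le hx]
      exact (hC x hx).le
    set T : ENNReal := ∫⁻ z in Set.Ioi (0:ℝ), ENNReal.ofReal (g z) with hT
    -- Hölder / Cauchy-Schwarz
    have hCS : ∀ x : ℝ, 0 ≤ x →
        ENNReal.ofReal x ≤ (ENNReal.ofReal C) ^ (1/2 : ℝ) * T ^ (1/2 : ℝ) := by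
      intro x hx
      set μ := volume.restrict (Set.Ioc (0:ℝ) x) with hμ
      have hγm : AEMeasurable γ μ :=
        ((hγc x hx).mono Set.Ioc_subset_Icc_self).aemeasurable measurableSet_Ioc
      set F : ℝ → ENNReal := fun a => ENNReal.ofReal (Real.exp (γ a / 2)) with hF
      set G : ℝ → ENNReal := fun a => ENNReal.ofReal (Real.exp (-(γ a) / 2)) with hG
      have hFm : AEMeasurable F μ := by
        have : Measurable fun t : ℝ => ENNReal.ofReal (Real.exp (t / 2)) := by fun_prop
        exact this.comp_aemeasurable hγm
      have hGm : AEMeasurable G μ := by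
        have : Measurable fun t : ℝ => ENNReal.ofReal (Real.exp (-t / 2)) := by fun_prop
        exact this.comp_aemeasurable hγm
      have hpq : Real.HolderConjugate 2 2 := ⟨by norm_num, by norm_num, by norm_num⟩
      have holder := ENNReal.lintegral_mul_le_Lp_mul_Lq μ hpq hFm hGm
      have hFG : ∀ a : ℝ, (F * G) a = 1 := by
        intro a
        simp only [Pi.mul_apply, hF, hG, ← ENNReal.ofReal_mul (Real.exp_pos _).le,
          ← Real.exp_add]
        ring_nf
        simp
      have hexp2 : ∀ t : ℝ, ENNReal.ofReal (Real.exp t) ^ (2:ℝ) =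
          ENNReal.ofReal (Real.exp (t * 2)) := by
        intro t
        rw [ENNReal.ofReal_rpow_of_pos (Real.exp_pos t), Real.exp_mul]
      have hLHS : ∫⁻ a, (F * G) a ∂μ = ENNReal.ofReal x := by
        simp only [hFG]
        rw [lintegral_one, hμ, Measure.restrict_apply MeasurableSet.univ, Set.univ_inter,
          Real.volume_Ioc]
        norm_num
      have hF2 : ∀ a, F a ^ (2:ℝ) = ENNReal.ofReal (f a) := by
        intro a; rw [hF]; simp only []
        rw [hexp2]; ring_nf; rfl
      have hG2 : ∀ a, G a ^ (2:ℝ) = ENNReal.ofReal (g a) := by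
        intro a; rw [hG]; simp only []
        rw [hexp2]; ring_nf; rfl
      rw [hLHS] at holder
      simp only [hF2, hG2] at holder
      refine holder.trans ?_
      exact mul_le_mul' (ENNReal.rpow_le_rpow (hA x hx) (by norm_num))
        (ENNReal.rpow_le_rpow (lintegral_mono_set Set.Ioc_subset_Ioi_self) (by norm_num))
    -- T must be ⊤
    have hTtop : T = ⊤ := by
      by_contra hne
      have hMne : (ENNReal.ofReal C) ^ (1/2 : ℝ) * T ^ (1/2 : ℝ) ≠ ⊤ := by
        apply ENNReal.mul_ne_top
        · exact ENNReal.rpow_ne_top_of_nonneg (by norm_num) ENNReal.ofReal_ne_top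
        · exact ENNReal.rpow_ne_top_of_nonneg (by norm_num) hne
      set M := (ENNReal.ofReal C) ^ (1/2 : ℝ) * T ^ (1/2 : ℝ) with hM
      have hx0 : (0:ℝ) ≤ M.toReal + 1 := by positivity
      have := hCS (M.toReal + 1) hx0
      rw [ENNReal.ofReal_le_iff_le_toReal hMne] at this
      linarith
    -- every tail integral of g is ⊤
    have htail : ∀ y : ℝ, 0 < y → ∫⁻ z in Set.Ioi y, ENNReal.ofReal (g z) = ⊤ := by
      intro y hy
      have hsplit : T = (∫⁻ z in Set.Ioc 0 y, ENNReal.ofReal (g z))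
          + ∫⁻ z in Set.Ioi y, ENNReal.ofReal (g z) := by
        rw [hT, ← Set.Ioc_union_Ioi_eq_Ioi hy.le,
          lintegral_union measurableSet_Ioi (Set.Ioc_disjoint_Ioi le_rfl)]
      -- first summand is finite
      obtain ⟨K, hK⟩ := (isCompact_Icc.image_of_continuousOn (hgc y hy.le)).bddAbove
      have hfin : ∫⁻ z in Set.Ioc 0 y, ENNReal.ofReal (g z) ≠ ⊤ := by
        have hb : ∫⁻ z in Set.Ioc 0 y, ENNReal.ofReal (g z)
            ≤ ∫⁻ _ in Set.Ioc 0 y, ENNReal.ofReal K := by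
          refine setLIntegral_mono measurable_const fun z hz => ?_
          exact ENNReal.ofReal_le_ofReal (hK ⟨z, Set.Ioc_subset_Icc_self hz, rfl⟩)
        refine ne_top_of_le_ne_top ?_ hb
        rw [setLIntegral_const, Real.volume_Ioc]
        exact ENNReal.mul_ne_top ENNReal.ofReal_ne_top ENNReal.ofReal_ne_top
      by_contra hcc
      rw [hTtop] at hsplit
      exact (ENNReal.add_ne_top.mpr ⟨hfin, hcc⟩) hsplit.symm
    -- contradiction with H1
    have heq : ∫⁻ y in Set.Ioi (0:ℝ),
        ENNReal.ofReal (Real.exp (γ y)) *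
          ∫⁻ z in Set.Ioi y, ENNReal.ofReal (Real.exp (-(γ z))) = ⊤ := by
      have : ∫⁻ y in Set.Ioi (0:ℝ),
          ENNReal.ofReal (Real.exp (γ y)) *
            ∫⁻ z in Set.Ioi y, ENNReal.ofReal (Real.exp (-(γ z)))
          = ∫⁻ _ in Set.Ioi (0:ℝ), (⊤ : ENNReal) := by
        refine setLIntegral_congr_fun measurableSet_Ioi ?_
        intro y hy
        beta_reduce
        rw [show (∫⁻ z in Set.Ioi y, ENNReal.ofReal (Real.exp (-(γ z)))) = ⊤ from htail y hy, ENNReal.mul_top]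
        simp [Real.exp_pos]
      rw [this, setLIntegral_const, Real.volume_Ioi, ENNReal.top_mul]
      simp
    rw [heq] at H1
    exact absurd H1 (by simp)
  -- conclude
  rw [tendsto_atTop]
  intro b
  obtain ⟨z, hz0, hzb⟩ := key b
  rw [eventually_atTop]
  exact ⟨z, fun x hx => hzb.trans (hmono z x hz0 hx)⟩
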